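/- Anti-substitution lemma for system U: if Φ is a derivation of Γ' ⊢ t{x:=u} : τ in system U, then there exist a finite index set I, types σ_i (i ∈ I), a derivation Φ_t of Γ; x:[σ_i]_{i∈I} ⊢ t : τ, and derivations Φ^i_u of Δ_i ⊢ u : σ_i for each i ∈ I, such that Γ' = Γ +_{i∈I} Δ_i and |Φ| = |Φ_t| + Σ_{i∈I}|Φ^i_u| − |I|. -/

import Mathlib

/-! # The Bang Calculus Revisited: common definitions.

Terms are represented with de Bruijn indices, so that all the meta-level
substitutions are capture-avoiding by construction. -/

/-- Terms of the λ!-calculus.  `esub t u` is the explicit substitution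
`t[0\u]`: the (anonymous) binder scopes over `t`, not over `u`. -/
inductive Tm : Type
  | var : ℕ → Tm
  | app : Tm → Tm → Tm
  | lam : Tm → Tm
  | bang : Tm → Tm
  | der : Tm → Tm
  | esub : Tm → Tm → Tm
  deriving DecidableEq

namespace Tm

/-- lifting a renaming under a binder -/
def liftR (f : ℕ → ℕ) : ℕ → ℕ
  | 0 => 0
  | k + 1 => f k + 1

/-- renaming of free variables -/
def rename (f : ℕ → ℕ) : Tm → Tm
  | var k => var (f k)
  | app t u => app (rename f t) (rename f u)
  | lam t => lam (rename (liftR f) t)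
  | bang t => bang (rename f t)
  | der t => der (rename f t)
  | esub t u => esub (rename (liftR f) t) (rename f u)

/-- lifting a simultaneous substitution under a binder -/
def liftS (σ : ℕ → Tm) : ℕ → Tm
  | 0 => var 0
  | k + 1 => rename (· + 1) (σ k)

/-- simultaneous (capture-avoiding) substitution -/
def subst (σ : ℕ → Tm) : Tm → Tm
  | var k => σ k
  | app t u => app (subst σ t) (subst σ u)
  | lam t => lam (subst (liftS σ) t)
  | bang t => bang (subst σ t)
  | der t => der (subst σ t)
  | esub t u => esub (subst (liftS σ) t) (subst σ u)

/-- capture-avoiding substitution of `u` for the variable `0` of `t`,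
where the result is placed under `n` extra binders (and `u` already lives
at that depth). -/
def substIn (n : ℕ) (u : Tm) (t : Tm) : Tm :=
  subst (fun k => match k with
    | 0 => u
    | k + 1 => var (k + n)) t

/-- capture-avoiding meta-level substitution `t{0 := u}` -/
def subst0 (u : Tm) (t : Tm) : Tm := substIn 0 u t

/-- plugging a term into a list context `L ::= ◻ | L[x\t]`; the head of the
list is the argument of the outermost explicit substitution. -/
def plug : List Tm → Tm → Tm
  | [], s => s
  | e :: L, s => esub (plug L s) e

/-- the w-size of a term -/
def wsize : Tm → ℕ
  | var _ => 0
  | app t u => 1 + wsize t + wsize u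
  | lam t => 1 + wsize t
  | bang _ => 0
  | der t => 1 + wsize t
  | esub t u => 1 + wsize t + wsize u

end Tm

/-- the names of the three rewriting rules of the λ!-calculus -/
inductive Rule : Type
  | dB | sb | db
  deriving DecidableEq

open Tm in
/-- the three rewriting rules, applied at the root (at a distance) -/
inductive Root : Rule → Tm → Tm → Prop
  | dB (L : List Tm) (t u : Tm) :
      Root .dB (app (plug L (lam t)) u)
               (plug L (esub t (rename (· + L.length) u)))
  | sb (L : List Tm) (t u : Tm) :
      Root .sb (esub t (plug L (bang u))) (plug L (substIn L.length u t))
  | db (L : List Tm) (t : Tm) :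
      Root .db (der (plug L (bang t))) (plug L t)

/-- closure of each rule under weak contexts (no reduction under `bang`) -/
inductive Step : Rule → Tm → Tm → Prop
  | root {r : Rule} {t t' : Tm} : Root r t t' → Step r t t'
  | appL {r t t'} (u : Tm) : Step r t t' → Step r (Tm.app t u) (Tm.app t' u)
  | appR {r u u'} (t : Tm) : Step r u u' → Step r (Tm.app t u) (Tm.app t u')
  | lam {r t t'} : Step r t t' → Step r (Tm.lam t) (Tm.lam t')
  | der {r t t'} : Step r t t' → Step r (Tm.der t) (Tm.der t')
  | esubL {r t t'} (u : Tm) : Step r t t' → Step r (Tm.esub t u) (Tm.esub t' u)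
  | esubR {r u u'} (t : Tm) : Step r u u' → Step r (Tm.esub t u) (Tm.esub t u')

/-- the weak reduction `→w` of the λ!-calculus -/
def StepW (t t' : Tm) : Prop := ∃ r, Step r t t'

/-- counted weak reduction: `RedCnt t (b, e) u` holds iff `t →w* u` using `b`
dB-steps and `e` steps of kind s!/d!. -/
inductive RedCnt : Tm → ℕ × ℕ → Tm → Prop
  | refl (t : Tm) : RedCnt t (0, 0) t
  | db {t t₁ u : Tm} {b e : ℕ} :
      Step .dB t t₁ → RedCnt t₁ (b, e) u → RedCnt t (b + 1, e) u
  | ex {t t₁ u : Tm} {b e : ℕ} :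
      (Step .sb t t₁ ∨ Step .db t t₁) → RedCnt t₁ (b, e) u →
      RedCnt t (b, e + 1) u

mutual
  /-- neutral w-normal terms -/
  inductive NeW : Tm → Prop
    | var (k : ℕ) : NeW (Tm.var k)
    | app {t u : Tm} : NaW t → NoW u → NeW (Tm.app t u)
    | der {t : Tm} : NbW t → NeW (Tm.der t)
    | esub {t u : Tm} : NeW t → NbW u → NeW (Tm.esub t u)
  /-- neutral-abs w-normal terms -/
  inductive NaW : Tm → Prop
    | bang (t : Tm) : NaW (Tm.bang t)
    | ne {t : Tm} : NeW t → NaW t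
    | esub {t u : Tm} : NaW t → NbW u → NaW (Tm.esub t u)
  /-- neutral-bang w-normal terms -/
  inductive NbW : Tm → Prop
    | ne {t : Tm} : NeW t → NbW t
    | lam {t : Tm} : NoW t → NbW (Tm.lam t)
    | esub {t u : Tm} : NbW t → NbW u → NbW (Tm.esub t u)
  /-- w-normal terms -/
  inductive NoW : Tm → Prop
    | na {t : Tm} : NaW t → NoW t
    | nb {t : Tm} : NbW t → NoW t
end

/-- clashes -/
inductive Clash : Tm → Prop
  | appBang (L : List Tm) (t u : Tm) : Clash (Tm.app (Tm.plug L (Tm.bang t)) u)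
  | esubLam (L : List Tm) (t u : Tm) : Clash (Tm.esub t (Tm.plug L (Tm.lam u)))
  | derLam (L : List Tm) (u : Tm) : Clash (Tm.der (Tm.plug L (Tm.lam u)))
  | appLam (L : List Tm) (t u : Tm) : Clash (Tm.app t (Tm.plug L (Tm.lam u)))

/-- `WSub t s` holds iff `t = W⟨s⟩` for some weak context `W` -/
inductive WSub : Tm → Tm → Prop
  | refl (t : Tm) : WSub t t
  | appL {t s : Tm} (u : Tm) : WSub t s → WSub (Tm.app t u) s
  | appR {u s : Tm} (t : Tm) : WSub u s → WSub (Tm.app t u) s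
  | lam {t s : Tm} : WSub t s → WSub (Tm.lam t) s
  | der {t s : Tm} : WSub t s → WSub (Tm.der t) s
  | esubL {t s : Tm} (u : Tm) : WSub t s → WSub (Tm.esub t u) s
  | esubR {u s : Tm} (t : Tm) : WSub u s → WSub (Tm.esub t u) s

/-- weak clash freeness -/
def Wcf (t : Tm) : Prop := ¬ ∃ s, WSub t s ∧ Clash s

mutual
  /-- neutral weak clash free normal terms -/
  inductive NeCF : Tm → Prop
    | var (k : ℕ) : NeCF (Tm.var k)
    | app {t u : Tm} : NeCF t → NaCF u → NeCF (Tm.app t u)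
    | der {t : Tm} : NeCF t → NeCF (Tm.der t)
    | esub {t u : Tm} : NeCF t → NeCF u → NeCF (Tm.esub t u)
  /-- neutral-abs weak clash free normal terms -/
  inductive NaCF : Tm → Prop
    | bang (t : Tm) : NaCF (Tm.bang t)
    | ne {t : Tm} : NeCF t → NaCF t
    | esub {t u : Tm} : NaCF t → NeCF u → NaCF (Tm.esub t u)
  /-- neutral-bang weak clash free normal terms -/
  inductive NbCF : Tm → Prop
    | ne {t : Tm} : NeCF t → NbCF t
    | lam {t : Tm} : NoCF t → NbCF (Tm.lam t)
    | esub {t u : Tm} : NbCF t → NeCF u → NbCF (Tm.esub t u)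
  /-- weak clash free normal terms -/
  inductive NoCF : Tm → Prop
    | na {t : Tm} : NaCF t → NoCF t
    | nb {t : Tm} : NbCF t → NoCF t
end

/-- Types of system 𝒰: base types, multiset types and arrow types.  A
multiset type is given by a list of types (a representative of the multiset
it determines). -/
inductive Ty : Type
  | base : ℕ → Ty
  | mult : List Ty → Ty
  | arr : List Ty → Ty → Ty

/-- typing contexts: functions from (de Bruijn) variables to multiset types -/
abbrev Ctx := ℕ → Multiset Ty

/-- the context mapping `k` to `M` and anything else to the empty multiset -/
def Ctx.single (k : ℕ) (M : Multiset Ty) : Ctx := fun j => if j = k then M else 0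

/-- removing the (type of the) bound variable `0` from a context -/
def Ctx.tail (Γ : Ctx) : Ctx := fun k => Γ (k + 1)

/-- extending a context with a multiset type for a fresh variable `0` -/
def Ctx.cons (M : Multiset Ty) (Γ : Ctx) : Ctx := fun k =>
  match k with
  | 0 => M
  | k + 1 => Γ k

/-- Sized typing of system 𝒰: `DerU Γ t τ n` means that there is a derivation
of `Γ ⊢ t : τ` whose size (number of rules, not counting `bg`) is `n`. -/
inductive DerU : Ctx → Tm → Ty → ℕ → Prop
  | ax (k : ℕ) (σ : Ty) : DerU (Ctx.single k {σ}) (Tm.var k) σ 1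
  | app {Γ Δ : Ctx} {t u : Tm} {M : List Ty} {τ : Ty} {n m : ℕ} :
      DerU Γ t (Ty.arr M τ) n → DerU Δ u (Ty.mult M) m →
      DerU (Γ + Δ) (Tm.app t u) τ (n + m + 1)
  | abs {Γ : Ctx} {t : Tm} {τ : Ty} {n : ℕ} (M : List Ty) :
      DerU Γ t τ n → Multiset.ofList M = Γ 0 →
      DerU (Ctx.tail Γ) (Tm.lam t) (Ty.arr M τ) (n + 1)
  | es {Γ Δ : Ctx} {t u : Tm} {σ : Ty} {M : List Ty} {n m : ℕ} :
      DerU Γ t σ n → DerU Δ u (Ty.mult M) m → Multiset.ofList M = Γ 0 →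
      DerU (Ctx.tail Γ + Δ) (Tm.esub t u) σ (n + m + 1)
  | bg {t : Tm} (prs : List (Ctx × Ty × ℕ)) :
      (∀ p ∈ prs, DerU p.1 t p.2.1 p.2.2) →
      DerU ((prs.map (·.1)).sum) (Tm.bang t)
           (Ty.mult (prs.map (·.2.1))) ((prs.map (·.2.2)).sum)
  | dr {Γ : Ctx} {t : Tm} {σ : Ty} {n : ℕ} :
      DerU Γ t (Ty.mult [σ]) n → DerU Γ (Tm.der t) σ (n + 1)

/-! ## The source λ-calculus with explicit substitutions (CBN / CBV) -/

/-- terms of the λ-calculus with explicit substitutions (de Bruijn) -/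
inductive Lm : Type
  | var : ℕ → Lm
  | app : Lm → Lm → Lm
  | lam : Lm → Lm
  | esub : Lm → Lm → Lm
  deriving DecidableEq

namespace Lm

def liftR (f : ℕ → ℕ) : ℕ → ℕ
  | 0 => 0
  | k + 1 => f k + 1

def rename (f : ℕ → ℕ) : Lm → Lm
  | var k => var (f k)
  | app t u => app (rename f t) (rename f u)
  | lam t => lam (rename (liftR f) t)
  | esub t u => esub (rename (liftR f) t) (rename f u)

def liftS (σ : ℕ → Lm) : ℕ → Lm
  | 0 => var 0
  | k + 1 => rename (· + 1) (σ k)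

def subst (σ : ℕ → Lm) : Lm → Lm
  | var k => σ k
  | app t u => app (subst σ t) (subst σ u)
  | lam t => lam (subst (liftS σ) t)
  | esub t u => esub (subst (liftS σ) t) (subst σ u)

def substIn (n : ℕ) (u : Lm) (t : Lm) : Lm :=
  subst (fun k => match k with
    | 0 => u
    | k + 1 => var (k + n)) t

/-- capture-avoiding meta-level substitution `t{0 := u}` -/
def subst0 (u : Lm) (t : Lm) : Lm := substIn 0 u t

def plug : List Lm → Lm → Lm
  | [], s => s
  | e :: L, s => esub (plug L s) e

/-- values -/
def IsVal : Lm → Prop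
  | var _ => True
  | lam _ => True
  | _ => False

/-- the n-size of a term -/
def nsize : Lm → ℕ
  | var _ => 0
  | lam t => 1 + nsize t
  | app t _ => 1 + nsize t
  | esub t _ => 1 + nsize t

/-- the v-size of a term -/
def vsize : Lm → ℕ
  | var _ => 0
  | lam _ => 0
  | app t u => 1 + vsize t + vsize u
  | esub t u => 1 + vsize t + vsize u

end Lm

/-- names of the CBN rules -/
inductive NRule : Type
  | dB | s
  deriving DecidableEq

/-- call-by-name reduction (closure of dB and s under CBN contexts) -/
inductive StepN : NRule → Lm → Lm → Prop
  | dB (L : List Lm) (t u : Lm) :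
      StepN .dB (Lm.app (Lm.plug L (Lm.lam t)) u)
                (Lm.plug L (Lm.esub t (Lm.rename (· + L.length) u)))
  | s (t u : Lm) : StepN .s (Lm.esub t u) (Lm.subst0 u t)
  | appL {r t t'} (u : Lm) : StepN r t t' → StepN r (Lm.app t u) (Lm.app t' u)
  | lam {r t t'} : StepN r t t' → StepN r (Lm.lam t) (Lm.lam t')
  | esubL {r t t'} (u : Lm) : StepN r t t' → StepN r (Lm.esub t u) (Lm.esub t' u)

/-- names of the CBV rules -/
inductive VRule : Type
  | dB | sv
  deriving DecidableEq

/-- call-by-value reduction (closure of dB and sv under CBV contexts) -/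
inductive StepV : VRule → Lm → Lm → Prop
  | dB (L : List Lm) (t u : Lm) :
      StepV .dB (Lm.app (Lm.plug L (Lm.lam t)) u)
                (Lm.plug L (Lm.esub t (Lm.rename (· + L.length) u)))
  | sv (L : List Lm) (t v : Lm) (hv : Lm.IsVal v) :
      StepV .sv (Lm.esub t (Lm.plug L v)) (Lm.plug L (Lm.substIn L.length v t))
  | appL {r t t'} (u : Lm) : StepV r t t' → StepV r (Lm.app t u) (Lm.app t' u)
  | appR {r u u'} (t : Lm) : StepV r u u' → StepV r (Lm.app t u) (Lm.app t u')
  | esubL {r t t'} (u : Lm) : StepV r t t' → StepV r (Lm.esub t u) (Lm.esub t' u)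
  | esubR {r u u'} (t : Lm) : StepV r u u' → StepV r (Lm.esub t u) (Lm.esub t u')

mutual
  /-- CBN neutral terms -/
  inductive NeN : Lm → Prop
    | var (k : ℕ) : NeN (Lm.var k)
    | app {t : Lm} (u : Lm) : NeN t → NeN (Lm.app t u)
  /-- CBN normal terms -/
  inductive NoN : Lm → Prop
    | lam {t : Lm} : NoN t → NoN (Lm.lam t)
    | ne {t : Lm} : NeN t → NoN t
end

mutual
  /-- CBV (substituted) variables -/
  inductive VrV : Lm → Prop
    | var (k : ℕ) : VrV (Lm.var k)
    | esub {t u : Lm} : VrV t → NeV u → VrV (Lm.esub t u)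
  /-- CBV neutral terms -/
  inductive NeV : Lm → Prop
    | app₁ {t u : Lm} : VrV t → NoV u → NeV (Lm.app t u)
    | app₂ {t u : Lm} : NeV t → NoV u → NeV (Lm.app t u)
    | esub {t u : Lm} : NeV t → NeV u → NeV (Lm.esub t u)
  /-- CBV normal terms -/
  inductive NoV : Lm → Prop
    | lam (t : Lm) : NoV (Lm.lam t)
    | vr {t : Lm} : VrV t → NoV t
    | ne {t : Lm} : NeV t → NoV t
    | esub {t u : Lm} : NoV t → NeV u → NoV (Lm.esub t u)
end

/-- counted CBN reduction, recording the number of dB- and s-steps -/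
inductive RedCntN : Lm → ℕ × ℕ → Lm → Prop
  | refl (t : Lm) : RedCntN t (0, 0) t
  | db {t t₁ u : Lm} {b e : ℕ} :
      StepN .dB t t₁ → RedCntN t₁ (b, e) u → RedCntN t (b + 1, e) u
  | s {t t₁ u : Lm} {b e : ℕ} :
      StepN .s t t₁ → RedCntN t₁ (b, e) u → RedCntN t (b, e + 1) u

/-- counted CBV reduction, recording the number of dB- and sv-steps -/
inductive RedCntV : Lm → ℕ × ℕ → Lm → Prop
  | refl (t : Lm) : RedCntV t (0, 0) t
  | db {t t₁ u : Lm} {b e : ℕ} :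
      StepV .dB t t₁ → RedCntV t₁ (b, e) u → RedCntV t (b + 1, e) u
  | sv {t t₁ u : Lm} {b e : ℕ} :
      StepV .sv t t₁ → RedCntV t₁ (b, e) u → RedCntV t (b, e + 1) u

/-- the CBN embedding into the λ!-calculus -/
def cbn : Lm → Tm
  | .var k => .var k
  | .lam t => .lam (cbn t)
  | .app t u => .app (cbn t) (.bang (cbn u))
  | .esub t u => .esub (cbn t) (.bang (cbn u))

/-- `deBang t = some s'` iff `t = L⟨!s⟩` and `s' = L⟨s⟩` -/
def deBang : Tm → Option Tm
  | .bang s => some s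
  | .esub t e => (deBang t).map (fun s => Tm.esub s e)
  | _ => none

/-- the CBV embedding into the λ!-calculus -/
def cbv : Lm → Tm
  | .var k => .bang (.var k)
  | .lam t => .bang (.lam (cbv t))
  | .app t u =>
      match deBang (cbv t) with
      | some r => Tm.app r (cbv u)
      | none => Tm.app (.der (cbv t)) (cbv u)
  | .esub t u => .esub (cbv t) (cbv u)

/-- Sized typing of system 𝒩 (call-by-name): `DerN Γ t τ n` means that there
is a derivation of `Γ ⊢ t : τ` of size `n` (counting all rules). -/
inductive DerN : Ctx → Lm → Ty → ℕ → Prop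
  | ax (k : ℕ) (σ : Ty) : DerN (Ctx.single k {σ}) (Lm.var k) σ 1
  | app {Γ : Ctx} {t u : Lm} {τ : Ty} {n : ℕ} (prs : List (Ctx × Ty × ℕ)) :
      DerN Γ t (Ty.arr (prs.map (·.2.1)) τ) n →
      (∀ p ∈ prs, DerN p.1 u p.2.1 p.2.2) →
      DerN (Γ + (prs.map (·.1)).sum) (Lm.app t u) τ
           (n + (prs.map (·.2.2)).sum + 1)
  | abs {Γ : Ctx} {t : Lm} {τ : Ty} {n : ℕ} (M : List Ty) :
      DerN Γ t τ n → Multiset.ofList M = Γ 0 →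
      DerN (Ctx.tail Γ) (Lm.lam t) (Ty.arr M τ) (n + 1)
  | es {Γ : Ctx} {t u : Lm} {τ : Ty} {n : ℕ} (prs : List (Ctx × Ty × ℕ)) :
      DerN Γ t τ n →
      Multiset.ofList (prs.map (·.2.1)) = Γ 0 →
      (∀ p ∈ prs, DerN p.1 u p.2.1 p.2.2) →
      DerN (Ctx.tail Γ + (prs.map (·.1)).sum) (Lm.esub t u) τ
           (n + (prs.map (·.2.2)).sum + 1)

/-- Sized typing of system 𝒱 (call-by-value): `DerV Γ t τ n` means that there
is a derivation of `Γ ⊢ t : τ` of size `n` (each rule counts 1, except that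
`ax` counts the cardinal of its multiset and `abs` contributes the sizes of
its premises plus the number of premises). -/
inductive DerV : Ctx → Lm → Ty → ℕ → Prop
  | ax (k : ℕ) (M : List Ty) :
      DerV (Ctx.single k (Multiset.ofList M)) (Lm.var k) (Ty.mult M) M.length
  | es {Γ Δ : Ctx} {t u : Lm} {σ : Ty} {M : List Ty} {n m : ℕ} :
      DerV Γ t σ n → DerV Δ u (Ty.mult M) m → Multiset.ofList M = Γ 0 →
      DerV (Ctx.tail Γ + Δ) (Lm.esub t u) σ (n + m + 1)
  | abs {t : Lm} (prs : List (Ctx × List Ty × Ty × ℕ)) :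
      (∀ p ∈ prs, DerV p.1 t p.2.2.1 p.2.2.2) →
      (∀ p ∈ prs, Multiset.ofList p.2.1 = p.1 0) →
      DerV ((prs.map (fun p => Ctx.tail p.1)).sum) (Lm.lam t)
           (Ty.mult (prs.map (fun p => Ty.arr p.2.1 p.2.2.1)))
           ((prs.map (·.2.2.2)).sum + prs.length)
  | app {Γ Δ : Ctx} {t u : Lm} {M : List Ty} {τ : Ty} {n m : ℕ} :
      DerV Γ t (Ty.mult [Ty.arr M τ]) n → DerV Δ u (Ty.mult M) m →
      DerV (Γ + Δ) (Lm.app t u) τ (n + m + 1)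

namespace AntiSubAux
open Tm

/-! ### renaming / substitution extensionality lemmas -/

theorem liftR_ext {f g : ℕ → ℕ} (h : ∀ k, f k = g k) : ∀ k, liftR f k = liftR g k := by
  intro k; cases k <;> simp [liftR, h]

theorem rename_ext : ∀ (t : Tm) {f g : ℕ → ℕ}, (∀ k, f k = g k) → rename f t = rename g t
  | var k, _, _, h => by simp [rename, h]
  | app a b, _, _, h => by simp [rename, rename_ext a h, rename_ext b h]
  | lam a, _, _, h => by simp [rename, rename_ext a (liftR_ext h)]
  | bang a, _, _, h => by simp [rename, rename_ext a h]
  | der a, _, _, h => by simp [rename, rename_ext a h]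
  | esub a b, _, _, h => by simp [rename, rename_ext a (liftR_ext h), rename_ext b h]

theorem liftR_comp (f g : ℕ → ℕ) : ∀ k, liftR g (liftR f k) = liftR (fun i => g (f i)) k := by
  intro k; cases k <;> simp [liftR]

theorem rename_comp : ∀ (t : Tm) (f g : ℕ → ℕ),
    rename g (rename f t) = rename (fun k => g (f k)) t
  | var k, _, _ => rfl
  | app a b, f, g => by simp [rename, rename_comp a f g, rename_comp b f g]
  | lam a, f, g => by
      simp [rename, rename_comp a (liftR f) (liftR g)]
      exact rename_ext a (liftR_comp f g)
  | bang a, f, g => by simp [rename, rename_comp a f g]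
  | der a, f, g => by simp [rename, rename_comp a f g]
  | esub a b, f, g => by
      simp [rename, rename_comp a (liftR f) (liftR g), rename_comp b f g]
      exact rename_ext a (liftR_comp f g)

theorem rename_id : ∀ (t : Tm) (f : ℕ → ℕ), (∀ k, f k = k) → rename f t = t
  | var k, _, h => by simp [rename, h]
  | app a b, f, h => by simp [rename, rename_id a f h, rename_id b f h]
  | lam a, f, h => by
      have hl : ∀ k, liftR f k = k := fun k => by cases k <;> simp [liftR, h]
      simp [rename, rename_id a _ hl]
  | bang a, f, h => by simp [rename, rename_id a f h]
  | der a, f, h => by simp [rename, rename_id a f h]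
  | esub a b, f, h => by
      have hl : ∀ k, liftR f k = k := fun k => by cases k <;> simp [liftR, h]
      simp [rename, rename_id a _ hl, rename_id b f h]

theorem liftS_ext {σ σ' : ℕ → Tm} (h : ∀ k, σ k = σ' k) : ∀ k, liftS σ k = liftS σ' k := by
  intro k; cases k <;> simp [liftS, h]

theorem subst_ext : ∀ (t : Tm) {σ σ' : ℕ → Tm}, (∀ k, σ k = σ' k) → subst σ t = subst σ' t
  | var k, _, _, h => h k
  | app a b, _, _, h => by simp [subst, subst_ext a h, subst_ext b h]
  | lam a, _, _, h => by simp [subst, subst_ext a (liftS_ext h)]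
  | bang a, _, _, h => by simp [subst, subst_ext a h]
  | der a, _, _, h => by simp [subst, subst_ext a h]
  | esub a b, _, _, h => by simp [subst, subst_ext a (liftS_ext h), subst_ext b h]

/-! ### the single-variable substitution family -/

/-- substitute `u` for variable `j`, shifting higher variables down -/
def sig (j : ℕ) (u : Tm) : ℕ → Tm := fun k =>
  if k < j then var k else if k = j then rename (· + j) u else var (k - 1)

theorem sig_lt {j k : ℕ} (u : Tm) (h : k < j) : sig j u k = var k := by
  simp [sig, h]

theorem sig_self (j : ℕ) (u : Tm) : sig j u j = rename (· + j) u := by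
  simp [sig]

theorem sig_gt {j k : ℕ} (u : Tm) (h : j < k) : sig j u k = var (k - 1) := by
  have h1 : ¬ k < j := by omega
  have h2 : k ≠ j := by omega
  simp [sig, h1, h2]

theorem sig_ne {j k : ℕ} (u : Tm) (h : k ≠ j) : ∃ i, sig j u k = var i := by
  rcases Nat.lt_or_ge k j with h'|h'
  · exact ⟨k, sig_lt u h'⟩
  · exact ⟨k - 1, sig_gt u (by omega)⟩

theorem liftS_sig (j : ℕ) (u : Tm) : ∀ k, liftS (sig j u) k = sig (j + 1) u k := by
  intro k
  cases k with
  | zero => simp [liftS, sig]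
  | succ k =>
    rcases Nat.lt_trichotomy k j with h|h|h
    · rw [liftS, sig_lt u h, sig_lt u (by omega : k + 1 < j + 1)]; rfl
    · subst h
      rw [liftS, sig_self, sig_self, rename_comp]
      exact rename_ext u (fun i => by omega)
    · rw [liftS, sig_gt u h, sig_gt u (by omega : j + 1 < k + 1)]
      simp only [rename, Tm.var.injEq]; omega

theorem subst_liftS_sig (t : Tm) (j : ℕ) (u : Tm) :
    subst (liftS (sig j u)) t = subst (sig (j + 1) u) t :=
  subst_ext t (liftS_sig j u)

theorem subst0_eq_sig (t u : Tm) : subst0 u t = subst (sig 0 u) t := by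
  refine subst_ext t (fun k => ?_)
  cases k with
  | zero => simp [sig]; exact (rename_id u _ (fun k => rfl)).symm
  | succ k => simp [sig]

/-! ### context lemmas -/

/-- insert a multiset type for a fresh variable `j` in a context -/
def insCtx (j : ℕ) (M : Multiset Ty) (Γ : Ctx) : Ctx := fun k =>
  if k < j then Γ k else if k = j then M else Γ (k - 1)

theorem listSum_apply (L : List Ctx) (k : ℕ) : L.sum k = (L.map (fun Γ => Γ k)).sum := by
  induction L with
  | nil => rfl
  | cons a l ih => simp only [List.sum_cons, List.map_cons]; rw [← ih]; rfl

theorem insCtx_add (j : ℕ) (M N : Multiset Ty) (Γ Δ : Ctx) :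
    insCtx j M Γ + insCtx j N Δ = insCtx j (M + N) (Γ + Δ) := by
  funext k; show insCtx j M Γ k + insCtx j N Δ k = _
  unfold insCtx; split <;> [rfl; split <;> rfl]

theorem insCtx_zero (j : ℕ) : insCtx j 0 (0 : Ctx) = 0 := by
  funext k; unfold insCtx; split <;> [rfl; split <;> rfl]

theorem insCtx_apply_zero {j : ℕ} (M : Multiset Ty) (Γ : Ctx) :
    insCtx (j + 1) M Γ 0 = Γ 0 := by
  simp [insCtx]

theorem tail_insCtx (j : ℕ) (M : Multiset Ty) (Γ : Ctx) :
    Ctx.tail (insCtx (j + 1) M Γ) = insCtx j M (Ctx.tail Γ) := by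
  funext k
  show insCtx (j + 1) M Γ (k + 1) = insCtx j M (Ctx.tail Γ) k
  unfold insCtx Ctx.tail
  rcases Nat.lt_trichotomy k j with h|h|h
  · rw [if_pos (by omega : k + 1 < j + 1), if_pos h]
  · subst h
    rw [if_neg (by omega), if_pos rfl, if_neg (by omega), if_pos rfl]
  · rw [if_neg (by omega), if_neg (by omega), if_neg (by omega), if_neg (by omega)]
    congr 1; omega

theorem insCtx_zero_single (j k : ℕ) (M : Multiset Ty) :
    insCtx j 0 (Ctx.single k M) = Ctx.single (if k < j then k else k + 1) M := by
  funext i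
  unfold insCtx Ctx.single
  split_ifs <;> first | rfl | omega

theorem insCtx_cons (M : Multiset Ty) (Γ : Ctx) : insCtx 0 M Γ = Ctx.cons M Γ := by
  funext k
  cases k with
  | zero => rfl
  | succ k =>
    show insCtx 0 M Γ (k+1) = Γ k
    unfold insCtx
    rw [if_neg (by omega), if_neg (by omega)]
    simp

theorem tail_listSum (L : List Ctx) : Ctx.tail L.sum = (L.map Ctx.tail).sum := by
  induction L with
  | nil => rfl
  | cons a l ih => simp [List.sum_cons, ← ih]; rfl

theorem liftR_inj {f : ℕ → ℕ} (hf : Function.Injective f) :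
    Function.Injective (liftR f) := by
  intro a b h
  match a, b with
  | 0, 0 => rfl
  | 0, b+1 => simp [liftR] at h
  | a+1, 0 => simp [liftR] at h
  | a+1, b+1 =>
    simp only [liftR, Nat.add_right_cancel_iff] at h
    exact congrArg (· + 1) (hf h)

theorem antiRename : ∀ {Γ' : Ctx} {s : Tm} {τ : Ty} {n : ℕ}, DerU Γ' s τ n →
    ∀ (f : ℕ → ℕ) (t : Tm), Function.Injective f → s = rename f t →
    DerU (fun k => Γ' (f k)) t τ n ∧ ∀ k, (∀ i, f i ≠ k) → Γ' k = 0 := by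
  intro Γ' s τ n h
  induction h with
  | ax k σ =>
    intro f t hf heq
    cases t <;> simp [rename] at heq
    case var j =>
      subst heq
      constructor
      · have e : (fun i => Ctx.single (f j) {σ} (f i)) = Ctx.single j {σ} := by
          funext i
          unfold Ctx.single
          by_cases hij : i = j
          · subst hij; simp
          · rw [if_neg (fun hc => hij (hf hc)), if_neg hij]
        exact e ▸ DerU.ax j σ
      · intro k hk
        unfold Ctx.single
        rw [if_neg (Ne.symm (hk j))]
  | app h1 h2 ih1 ih2 =>
    intro f t hf heq
    cases t <;> simp [rename] at heq
    case app a b =>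
      obtain ⟨d1, z1⟩ := ih1 f a hf heq.1
      obtain ⟨d2, z2⟩ := ih2 f b hf heq.2
      refine ⟨DerU.app d1 d2, fun k hk => ?_⟩
      simp only [Pi.add_apply]
      rw [z1 k hk, z2 k hk, add_zero]
  | abs M h1 hM ih1 =>
    intro f t hf heq
    cases t <;> simp [rename] at heq
    case lam a =>
      obtain ⟨d, z⟩ := ih1 (liftR f) a (liftR_inj hf) heq
      refine ⟨DerU.abs M d hM, fun k hk => ?_⟩
      refine z (k+1) (fun i hi => ?_)
      cases i with
      | zero => simp [liftR] at hi
      | succ i => simp only [liftR, Nat.add_right_cancel_iff] at hi; exact hk i hi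
  | es h1 h2 hM ih1 ih2 =>
    intro f t hf heq
    cases t <;> simp [rename] at heq
    case esub a b =>
      obtain ⟨d1, z1⟩ := ih1 (liftR f) a (liftR_inj hf) heq.1
      obtain ⟨d2, z2⟩ := ih2 f b hf heq.2
      refine ⟨DerU.es d1 d2 hM, fun k hk => ?_⟩
      have z1' : _ = (0 : Multiset Ty) := z1 (k+1) (fun i hi => by
        cases i with
        | zero => simp [liftR] at hi
        | succ i => simp only [liftR, Nat.add_right_cancel_iff] at hi; exact hk i hi)
      simp only [Pi.add_apply]
      rw [z2 k hk, add_zero]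
      exact z1'
  | bg prs hp ih =>
    intro f t hf heq
    cases t <;> simp [rename] at heq
    case bang a =>
      constructor
      · have d := DerU.bg (t := a) (prs.map (fun p => ((fun k => p.1 (f k) : Ctx), p.2)))
          (fun q hq => by
            obtain ⟨p, hp', rfl⟩ := List.mem_map.1 hq
            exact (ih p hp' f a hf heq).1)
        have ectx : (((prs.map (fun p => ((fun k => p.1 (f k) : Ctx), p.2))).map (·.1)).sum : Ctx)
            = fun k => ((prs.map (·.1)).sum : Ctx) (f k) := by
          funext k
          rw [listSum_apply]
          conv_rhs => rw [listSum_apply]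
          simp only [List.map_map]
          rfl
        have ety : ((prs.map (fun p => ((fun k => p.1 (f k) : Ctx), p.2))).map (·.2.1))
            = prs.map (·.2.1) := by simp [List.map_map, Function.comp]
        have esz : ((prs.map (fun p => ((fun k => p.1 (f k) : Ctx), p.2))).map (·.2.2))
            = prs.map (·.2.2) := by simp [List.map_map, Function.comp]
        rw [ectx, ety, esz] at d
        exact d
      · intro k hk
        rw [listSum_apply]
        apply List.sum_eq_zero
        intro x hx
        rw [List.map_map, List.mem_map] at hx
        obtain ⟨p, hp', rfl⟩ := hx
        exact (ih p hp' f a hf heq).2 k hk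
  | dr h1 ih1 =>
    intro f t hf heq
    cases t <;> simp [rename] at heq
    case der a =>
      obtain ⟨d, z⟩ := ih1 f a hf heq
      exact ⟨DerU.dr d, z⟩

/-! ### list helpers -/

theorem map_tailpair_ty (l : List (Ctx × Ty × ℕ)) :
    (l.map (fun p => (Ctx.tail p.1, p.2))).map (·.2.1) = l.map (·.2.1) := by
  induction l <;> simp [*]

theorem map_tailpair_sz (l : List (Ctx × Ty × ℕ)) :
    (l.map (fun p => (Ctx.tail p.1, p.2))).map (·.2.2) = l.map (·.2.2) := by
  induction l <;> simp [*]

theorem map_tailpair_ctx (l : List (Ctx × Ty × ℕ)) :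
    (l.map (fun p => (Ctx.tail p.1, p.2))).map (·.1) = (l.map (·.1)).map Ctx.tail := by
  induction l <;> simp [*]

/-! ### the case `t = var j` of the main lemma -/

theorem varCase {Γ' : Ctx} {τ : Ty} {n j : ℕ} {u : Tm}
    (h : DerU Γ' (rename (· + j) u) τ n) :
    ∃ (prs : List (Ctx × Ty × ℕ)) (Γ : Ctx) (m : ℕ),
      DerU (insCtx j (Multiset.ofList (prs.map (·.2.1))) Γ) (var j) τ m ∧
      (∀ p ∈ prs, DerU p.1 (rename (· + j) u) p.2.1 p.2.2) ∧
      Γ' = Γ + (prs.map (·.1)).sum ∧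
      n + prs.length = m + (prs.map (·.2.2)).sum := by
  refine ⟨[(Γ', τ, n)], 0, 1, ?_, ?_, ?_, ?_⟩
  · have e : insCtx j (Multiset.ofList [τ]) (0 : Ctx) = Ctx.single j {τ} := by
      funext i; unfold insCtx Ctx.single
      split_ifs <;> first | rfl | omega
    show DerU (insCtx j (Multiset.ofList [τ]) 0) (var j) τ 1
    rw [e]
    exact DerU.ax j τ
  · intro p hp; rw [List.mem_singleton] at hp; subst hp; exact h
  · show Γ' = 0 + (Γ' + 0); rw [add_zero, zero_add]
  · simp
    omega

theorem varCaseOf {Γ' : Ctx} {τ : Ty} {n j : ℕ} {u : Tm} {s : Tm}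
    (h : DerU Γ' s τ n) (heq : s = subst (sig j u) (var j)) :
    ∃ (prs : List (Ctx × Ty × ℕ)) (Γ : Ctx) (m : ℕ),
      DerU (insCtx j (Multiset.ofList (prs.map (·.2.1))) Γ) (var j) τ m ∧
      (∀ p ∈ prs, DerU p.1 (rename (· + j) u) p.2.1 p.2.2) ∧
      Γ' = Γ + (prs.map (·.1)).sum ∧
      n + prs.length = m + (prs.map (·.2.2)).sum := by
  apply varCase
  have h' := heq ▸ h
  simpa only [Tm.subst, sig_self] using h'

/-! ### shifting down the `u`-premises produced under a binder -/

theorem shiftDown {j : ℕ} {u : Tm} {prs : List (Ctx × Ty × ℕ)}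
    (hu : ∀ p ∈ prs, DerU p.1 (rename (· + (j + 1)) u) p.2.1 p.2.2) :
    ∀ p ∈ prs, DerU (Ctx.tail p.1) (rename (· + j) u) p.2.1 p.2.2 ∧ p.1 0 = 0 := by
  intro p hp
  have h1 := hu p hp
  have e : rename (· + (j + 1)) u = rename (· + 1) (rename (· + j) u) := by
    rw [rename_comp]; exact (rename_ext u (fun k => by omega)).symm
  rw [e] at h1
  have h2 := antiRename h1 (· + 1) (rename (· + j) u)
    (fun a b hab => by simp only at hab; omega) rfl
  exact ⟨h2.1, h2.2 0 (fun i hi => by omega)⟩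

theorem sum_apply_zero {prs : List (Ctx × Ty × ℕ)}
    (hz : ∀ p ∈ prs, p.1 0 = 0) : ((prs.map (·.1)).sum : Ctx) 0 = 0 := by
  rw [listSum_apply]
  apply List.sum_eq_zero
  intro x hx
  rw [List.map_map, List.mem_map] at hx
  obtain ⟨p, hp, rfl⟩ := hx
  exact hz p hp

/-! ### combining the premises in the `bg` case -/

theorem bgAux (j : ℕ) (a u0 : Tm) :
    ∀ (prs0 : List (Ctx × Ty × ℕ)),
    (∀ p ∈ prs0, ∃ (prs : List (Ctx × Ty × ℕ)) (Γ : Ctx) (m : ℕ),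
        DerU (insCtx j (Multiset.ofList (prs.map (·.2.1))) Γ) a p.2.1 m ∧
        (∀ q ∈ prs, DerU q.1 (rename (· + j) u0) q.2.1 q.2.2) ∧
        p.1 = Γ + (prs.map (·.1)).sum ∧
        p.2.2 + prs.length = m + (prs.map (·.2.2)).sum) →
    ∃ (nprs prs : List (Ctx × Ty × ℕ)) (Γ : Ctx),
      (∀ q ∈ nprs, DerU q.1 a q.2.1 q.2.2) ∧
      nprs.map (·.2.1) = prs0.map (·.2.1) ∧
      (nprs.map (·.1)).sum = insCtx j (Multiset.ofList (prs.map (·.2.1))) Γ ∧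
      (∀ q ∈ prs, DerU q.1 (rename (· + j) u0) q.2.1 q.2.2) ∧
      (prs0.map (·.1)).sum = Γ + (prs.map (·.1)).sum ∧
      (prs0.map (·.2.2)).sum + prs.length
        = (nprs.map (·.2.2)).sum + (prs.map (·.2.2)).sum := by
  intro prs0
  induction prs0 with
  | nil =>
    intro _
    exact ⟨[], [], 0, by simp, rfl, by simp [insCtx_zero], by simp, by simp, by simp⟩
  | cons p ps ihp =>
    intro H
    obtain ⟨prsp, Γp, mp, dp, hup, hcp, hsp⟩ := H p (by simp)
    obtain ⟨nprs', prs', Γ', hn', hty', hcs', hu', hc', hs'⟩ :=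
      ihp (fun q hq => H q (by simp [hq]))
    refine ⟨(insCtx j (Multiset.ofList (prsp.map (·.2.1))) Γp, p.2.1, mp) :: nprs',
            prsp ++ prs', Γp + Γ', ?_, ?_, ?_, ?_, ?_, ?_⟩
    · intro q hq
      rcases List.mem_cons.1 hq with rfl | hq'
      exacts [dp, hn' q hq']
    · simp [hty']
    · simp only [List.map_cons, List.sum_cons]
      rw [hcs', insCtx_add]
      simp
    · intro q hq
      rcases List.mem_append.1 hq with h | h
      exacts [hup q h, hu' q h]
    · simp only [List.map_cons, List.sum_cons, List.map_append, List.sum_append]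
      rw [hcp, hc']
      abel
    · simp only [List.map_cons, List.sum_cons, List.map_append, List.sum_append,
        List.length_cons, List.length_append]
      omega

/-! ### the generalized anti-substitution lemma -/

theorem genAnti : ∀ {Γ' : Ctx} {s : Tm} {τ : Ty} {n : ℕ}, DerU Γ' s τ n →
    ∀ (j : ℕ) (t0 u0 : Tm), s = subst (sig j u0) t0 →
    ∃ (prs : List (Ctx × Ty × ℕ)) (Γ : Ctx) (m : ℕ),
      DerU (insCtx j (Multiset.ofList (prs.map (·.2.1))) Γ) t0 τ m ∧
      (∀ p ∈ prs, DerU p.1 (rename (· + j) u0) p.2.1 p.2.2) ∧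
      Γ' = Γ + (prs.map (·.1)).sum ∧
      n + prs.length = m + (prs.map (·.2.2)).sum := by
  intro Γ' s τ n h
  induction h with
  | ax k σ =>
    intro j t0 u0 heq
    cases t0 with
    | var i =>
      by_cases hij : i = j
      · subst hij
        exact varCaseOf (DerU.ax k σ) heq
      · simp only [Tm.subst] at heq
        refine ⟨[], Ctx.single k {σ}, 1, ?_, by simp, ?_, by simp⟩
        · have e := insCtx_zero_single j k ({σ} : Multiset Ty)
          show DerU (insCtx j 0 (Ctx.single k {σ})) (var i) σ 1
          rw [e]
          rcases Nat.lt_or_ge i j with hcase | hcase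
          · rw [sig_lt u0 hcase] at heq
            injection heq with hk
            rw [hk, if_pos hcase]
            exact DerU.ax i σ
          · rw [sig_gt u0 (by omega)] at heq
            injection heq with hk
            rw [hk, if_neg (by omega), show i - 1 + 1 = i from by omega]
            exact DerU.ax i σ
        · show Ctx.single k {σ} = Ctx.single k {σ} + 0
          rw [add_zero]
    | app a b => simp [Tm.subst] at heq
    | lam a => simp [Tm.subst] at heq
    | bang a => simp [Tm.subst] at heq
    | der a => simp [Tm.subst] at heq
    | esub a b => simp [Tm.subst] at heq
  | @app Γ Δ t₁ t₂ M τ1 n1 n2 h1 h2 ih1 ih2 =>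
    intro j t0 u0 heq
    cases t0 with
    | var i =>
      by_cases hij : i = j
      · subst hij; exact varCaseOf (DerU.app h1 h2) heq
      · obtain ⟨i', hi'⟩ := sig_ne u0 hij
        simp [Tm.subst, hi'] at heq
    | app a b =>
      simp only [Tm.subst, Tm.app.injEq] at heq
      obtain ⟨prs1, Γ1, m1, d1, hu1, hc1, hs1⟩ := ih1 j a u0 heq.1
      obtain ⟨prs2, Γ2, m2, d2, hu2, hc2, hs2⟩ := ih2 j b u0 heq.2
      refine ⟨prs1 ++ prs2, Γ1 + Γ2, m1 + m2 + 1, ?_, ?_, ?_, ?_⟩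
      · have d := DerU.app d1 d2
        rw [insCtx_add] at d
        have e : Multiset.ofList ((prs1 ++ prs2).map (·.2.1))
            = Multiset.ofList (prs1.map (·.2.1)) + Multiset.ofList (prs2.map (·.2.1)) := by
          simp
        rw [e]
        exact d
      · intro p hp
        rcases List.mem_append.1 hp with hh | hh
        exacts [hu1 p hh, hu2 p hh]
      · rw [hc1, hc2]
        simp only [List.map_append, List.sum_append]
        abel
      · simp only [List.map_append, List.sum_append, List.length_append]
        omega
    | lam a => simp [Tm.subst] at heq
    | bang a => simp [Tm.subst] at heq
    | der a => simp [Tm.subst] at heq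
    | esub a b => simp [Tm.subst] at heq
  | @abs Γ t₁ τ1 n1 M h1 hM ih1 =>
    intro j t0 u0 heq
    cases t0 with
    | var i =>
      by_cases hij : i = j
      · subst hij; exact varCaseOf (DerU.abs M h1 hM) heq
      · obtain ⟨i', hi'⟩ := sig_ne u0 hij
        simp [Tm.subst, hi'] at heq
    | lam a =>
      simp only [Tm.subst, Tm.lam.injEq] at heq
      rw [subst_liftS_sig] at heq
      obtain ⟨prs1, Γ1, m1, d1, hu1, hc1, hs1⟩ := ih1 (j+1) a u0 heq
      have hz := shiftDown hu1
      refine ⟨prs1.map (fun p => (Ctx.tail p.1, p.2)), Ctx.tail Γ1, m1 + 1, ?_, ?_, ?_, ?_⟩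
      · have hM' : Multiset.ofList M = insCtx (j+1) (Multiset.ofList (prs1.map (·.2.1))) Γ1 0 := by
          rw [insCtx_apply_zero]
          have h0 : Γ 0 = Γ1 0 + ((prs1.map (·.1)).sum : Ctx) 0 := by rw [hc1]; rfl
          rw [hM, h0, sum_apply_zero (fun p hp => (hz p hp).2), add_zero]
        have d := DerU.abs M d1 hM'
        rw [tail_insCtx] at d
        rw [map_tailpair_ty]
        exact d
      · intro p hp
        obtain ⟨q, hq, rfl⟩ := List.mem_map.1 hp
        exact (hz q hq).1
      · rw [map_tailpair_ctx, ← tail_listSum, hc1]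
        rfl
      · rw [map_tailpair_sz]
        simp only [List.length_map]
        omega
    | app a b => simp [Tm.subst] at heq
    | bang a => simp [Tm.subst] at heq
    | der a => simp [Tm.subst] at heq
    | esub a b => simp [Tm.subst] at heq
  | @es Γ Δ t₁ t₂ σ1 M n1 n2 h1 h2 hM ih1 ih2 =>
    intro j t0 u0 heq
    cases t0 with
    | var i =>
      by_cases hij : i = j
      · subst hij; exact varCaseOf (DerU.es h1 h2 hM) heq
      · obtain ⟨i', hi'⟩ := sig_ne u0 hij
        simp [Tm.subst, hi'] at heq
    | esub a b =>
      simp only [Tm.subst, Tm.esub.injEq] at heq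
      obtain ⟨heq1, heq2⟩ := heq
      rw [subst_liftS_sig] at heq1
      obtain ⟨prs1, Γ1, m1, d1, hu1, hc1, hs1⟩ := ih1 (j+1) a u0 heq1
      obtain ⟨prs2, Γ2, m2, d2, hu2, hc2, hs2⟩ := ih2 j b u0 heq2
      have hz := shiftDown hu1
      refine ⟨prs1.map (fun p => (Ctx.tail p.1, p.2)) ++ prs2,
              Ctx.tail Γ1 + Γ2, m1 + m2 + 1, ?_, ?_, ?_, ?_⟩
      · have hM' : Multiset.ofList M = insCtx (j+1) (Multiset.ofList (prs1.map (·.2.1))) Γ1 0 := by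
          rw [insCtx_apply_zero]
          have h0 : Γ 0 = Γ1 0 + ((prs1.map (·.1)).sum : Ctx) 0 := by rw [hc1]; rfl
          rw [hM, h0, sum_apply_zero (fun p hp => (hz p hp).2), add_zero]
        have d := DerU.es d1 d2 hM'
        rw [tail_insCtx, insCtx_add] at d
        have e : Multiset.ofList (((prs1.map (fun p => (Ctx.tail p.1, p.2)) ++ prs2).map (·.2.1)))
            = Multiset.ofList (prs1.map (·.2.1)) + Multiset.ofList (prs2.map (·.2.1)) := by
          rw [List.map_append, map_tailpair_ty]
          simp
        rw [e]
        exact d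
      · intro p hp
        rcases List.mem_append.1 hp with hh | hh
        · obtain ⟨q, hq, rfl⟩ := List.mem_map.1 hh
          exact (hz q hq).1
        · exact hu2 p hh
      · rw [hc1, hc2]
        rw [List.map_append, List.sum_append, map_tailpair_ctx, ← tail_listSum]
        have e : Ctx.tail (Γ1 + (prs1.map (·.1)).sum)
            = Ctx.tail Γ1 + Ctx.tail ((prs1.map (·.1)).sum) := rfl
        rw [e]
        abel
      · simp only [List.map_append, List.sum_append, List.length_append, List.length_map,
          map_tailpair_sz]
        omega
    | app a b => simp [Tm.subst] at heq
    | lam a => simp [Tm.subst] at heq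
    | bang a => simp [Tm.subst] at heq
    | der a => simp [Tm.subst] at heq
  | @bg t₁ prs0 hp ih =>
    intro j t0 u0 heq
    cases t0 with
    | var i =>
      by_cases hij : i = j
      · subst hij; exact varCaseOf (DerU.bg prs0 hp) heq
      · obtain ⟨i', hi'⟩ := sig_ne u0 hij
        simp [Tm.subst, hi'] at heq
    | bang a =>
      simp only [Tm.subst, Tm.bang.injEq] at heq
      obtain ⟨nprs, prs, Γ, hn, hty, hcs, hu, hc, hsz⟩ :=
        bgAux j a u0 prs0 (fun p hp' => ih p hp' j a u0 heq)
      refine ⟨prs, Γ, (nprs.map (·.2.2)).sum, ?_, hu, hc, ?_⟩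
      · have d := DerU.bg nprs hn
        rw [hcs, hty] at d
        exact d
      · exact hsz
    | app a b => simp [Tm.subst] at heq
    | lam a => simp [Tm.subst] at heq
    | der a => simp [Tm.subst] at heq
    | esub a b => simp [Tm.subst] at heq
  | @dr Γ t₁ σ1 n1 h1 ih1 =>
    intro j t0 u0 heq
    cases t0 with
    | var i =>
      by_cases hij : i = j
      · subst hij; exact varCaseOf (DerU.dr h1) heq
      · obtain ⟨i', hi'⟩ := sig_ne u0 hij
        simp [Tm.subst, hi'] at heq
    | der a =>
      simp only [Tm.subst, Tm.der.injEq] at heq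
      obtain ⟨prs1, Γ1, m1, d1, hu1, hc1, hs1⟩ := ih1 j a u0 heq
      exact ⟨prs1, Γ1, m1 + 1, DerU.dr d1, hu1, hc1, by omega⟩
    | app a b => simp [Tm.subst] at heq
    | lam a => simp [Tm.subst] at heq
    | bang a => simp [Tm.subst] at heq
    | esub a b => simp [Tm.subst] at heq

end AntiSubAux

/-- **Anti-substitution lemma for system 𝒰** (Lemma 8): if
`Γ' ⊢ t{x:=u} : τ` has a derivation of size `n`, then there are a finite
family `(Δᵢ, σᵢ, mᵢ)_{i∈I}` (the list `prs`), a context `Γ` and a derivation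
of `Γ; x:[σᵢ]_{i∈I} ⊢ t : τ` of size `m`, together with derivations of
`Δᵢ ⊢ u : σᵢ` of size `mᵢ`, such that `Γ' = Γ + Σᵢ Δᵢ` and
`n = m + Σᵢ mᵢ − |I|`.  (The variable `x` is the de Bruijn index `0`.) -/
theorem anti_substitution {Γ' : Ctx} {t u : Tm} {τ : Ty} {n : ℕ}
    (h : DerU Γ' (Tm.subst0 u t) τ n) :
    ∃ (prs : List (Ctx × Ty × ℕ)) (Γ : Ctx) (m : ℕ),
      DerU (Ctx.cons (Multiset.ofList (prs.map (·.2.1))) Γ) t τ m ∧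
      (∀ p ∈ prs, DerU p.1 u p.2.1 p.2.2) ∧
      Γ' = Γ + (prs.map (·.1)).sum ∧
      n + prs.length = m + (prs.map (·.2.2)).sum := by
  rw [AntiSubAux.subst0_eq_sig] at h
  obtain ⟨prs, Γ, m, d, hu, hc, hs⟩ := AntiSubAux.genAnti h 0 t u rfl
  refine ⟨prs, Γ, m, ?_, ?_, hc, hs⟩
  · rwa [AntiSubAux.insCtx_cons] at d
  · intro p hp
    have h1 := hu p hp
    rwa [AntiSubAux.rename_id u (fun x => x + 0) (fun k => rfl)] at h1
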